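/- Let (M, d) be a metric space equipped with a Borel measure μ that is doubling: there is C_D ≥ 1 such that 0 < μ(B(x, 2r)) ≤ C_D·μ(B(x, r)) < ∞ for all x ∈ M and r > 0, where B(x,r) is the closed ball of radius r about x. Fix o ∈ M. Then for every b > 0 there exist constants C ≥ 1 and b' > 0 such that for all x, y ∈ M and all t > 0: (1/μ(B(o,√t)))·exp(−b·(d(o,x)² + d(o,y)²)/t) ≤ (C/μ(B(x,√t)))·exp(−b'·d(x,y)²/t). -/

import Mathlib

open MeasureTheory Filter

private lemma doub_iter {M : Type*} [MetricSpace M] [MeasurableSpace M]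
    (μ : Measure M) (C_D : ℝ)
    (hdoub : ∀ (x : M) (r : ℝ), 0 < r →
      μ (Metric.closedBall x (2 * r)) ≤ ENNReal.ofReal C_D * μ (Metric.closedBall x r))
    (x : M) (r : ℝ) (hr : 0 < r) (k : ℕ) :
    μ (Metric.closedBall x (2 ^ k * r)) ≤ (ENNReal.ofReal C_D) ^ k * μ (Metric.closedBall x r) := by
  induction k with
  | zero => simp
  | succ k ih =>
      have h2 : (2:ℝ) ^ (k+1) * r = 2 * (2 ^ k * r) := by ring
      rw [h2]
      calc μ (Metric.closedBall x (2 * (2 ^ k * r)))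
          ≤ ENNReal.ofReal C_D * μ (Metric.closedBall x (2 ^ k * r)) :=
            hdoub x _ (by positivity)
        _ ≤ ENNReal.ofReal C_D * ((ENNReal.ofReal C_D) ^ k * μ (Metric.closedBall x r)) :=
            mul_le_mul_right ih _
        _ = (ENNReal.ofReal C_D) ^ (k+1) * μ (Metric.closedBall x r) := by ring

theorem stmt_17 {M : Type*} [MetricSpace M] [MeasurableSpace M] [BorelSpace M]
    (μ : Measure M) (C_D : ℝ) (hCD : 1 ≤ C_D)
    (hpos : ∀ (x : M) (r : ℝ), 0 < r → 0 < μ (Metric.closedBall x r))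
    (hfin : ∀ (x : M) (r : ℝ), 0 < r → μ (Metric.closedBall x r) < ⊤)
    (hdoub : ∀ (x : M) (r : ℝ), 0 < r →
      μ (Metric.closedBall x (2 * r)) ≤ ENNReal.ofReal C_D * μ (Metric.closedBall x r))
    (o : M) (b : ℝ) (hb : 0 < b) :
    ∃ C ≥ (1:ℝ), ∃ b' > (0:ℝ), ∀ x y : M, ∀ t > (0:ℝ),
      (1 / (μ (Metric.closedBall o (Real.sqrt t))).toReal) *
          Real.exp (-(b * ((dist o x ^ 2 + dist o y ^ 2) / t))) ≤
        (C / (μ (Metric.closedBall x (Real.sqrt t))).toReal) *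
          Real.exp (-(b' * (dist x y ^ 2 / t))) := by
  have hCD0 : (0:ℝ) < C_D := lt_of_lt_of_le one_pos hCD
  set γ : ℝ := Real.log C_D / Real.log 2 with hγdef
  have hγ0 : 0 ≤ γ := div_nonneg (Real.log_nonneg hCD) (Real.log_nonneg one_le_two)
  refine ⟨C_D * Real.exp (γ ^ 2 / (2 * b)), ?_, b / 4, by positivity, ?_⟩
  · calc (1:ℝ) = 1 * 1 := by ring
      _ ≤ C_D * Real.exp (γ ^ 2 / (2 * b)) :=
        mul_le_mul hCD (Real.one_le_exp (by positivity)) zero_le_one (le_of_lt hCD0)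
  intro x y t ht
  have hst : 0 < Real.sqrt t := Real.sqrt_pos.2 ht
  -- key measure comparison
  set s : ℝ := dist x o / Real.sqrt t with hsdef
  have hs0 : 0 ≤ s := div_nonneg dist_nonneg hst.le
  set k : ℕ := ⌈Real.logb 2 (1 + s)⌉₊ with hkdef
  have hlogb0 : 0 ≤ Real.logb 2 (1 + s) := Real.logb_nonneg one_lt_two (by linarith)
  have h2k : 1 + s ≤ 2 ^ k := by
    have h1 : Real.logb 2 (1 + s) ≤ (k:ℝ) := Nat.le_ceil _
    have h2 : (2:ℝ) ^ (Real.logb 2 (1+s)) ≤ (2:ℝ) ^ ((k:ℝ)) :=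
      Real.rpow_le_rpow_of_exponent_le one_le_two h1
    rwa [Real.rpow_logb two_pos (by norm_num) (by linarith), Real.rpow_natCast] at h2
  have hkle : (k:ℝ) ≤ Real.logb 2 (1 + s) + 1 := (Nat.ceil_lt_add_one hlogb0).le
  -- subset
  have hsub : Metric.closedBall x (Real.sqrt t) ⊆ Metric.closedBall o (2 ^ k * Real.sqrt t) := by
    apply Metric.closedBall_subset_closedBall'
    have : Real.sqrt t + dist x o = (1 + s) * Real.sqrt t := by
      rw [hsdef, add_mul, one_mul, div_mul_cancel₀ _ hst.ne']
    rw [this]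
    exact mul_le_mul_of_nonneg_right h2k hst.le
  have hmeas : μ (Metric.closedBall x (Real.sqrt t)) ≤
      ENNReal.ofReal (C_D * Real.exp (γ * s)) * μ (Metric.closedBall o (Real.sqrt t)) := by
    calc μ (Metric.closedBall x (Real.sqrt t))
        ≤ μ (Metric.closedBall o (2 ^ k * Real.sqrt t)) := measure_mono hsub
      _ ≤ (ENNReal.ofReal C_D) ^ k * μ (Metric.closedBall o (Real.sqrt t)) :=
          doub_iter μ C_D hdoub o _ hst k
      _ ≤ ENNReal.ofReal (C_D * Real.exp (γ * s)) * μ (Metric.closedBall o (Real.sqrt t)) := by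
          apply mul_le_mul_left
          rw [← ENNReal.ofReal_pow hCD0.le]
          apply ENNReal.ofReal_le_ofReal
          have hCDk : C_D ^ k = Real.exp ((k:ℝ) * Real.log C_D) := by
            rw [Real.exp_nat_mul, Real.exp_log hCD0]
          rw [hCDk]
          have hln : Real.log (1 + s) ≤ s := by
            have := Real.log_le_sub_one_of_pos (x := 1 + s) (by linarith)
            linarith
          have hexp : (k:ℝ) * Real.log C_D ≤ Real.log C_D + γ * s := by
            have h1 : (k:ℝ) * Real.log C_D ≤ (Real.logb 2 (1 + s) + 1) * Real.log C_D :=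
              mul_le_mul_of_nonneg_right hkle (Real.log_nonneg hCD)
            have h2 : Real.logb 2 (1 + s) * Real.log C_D = γ * Real.log (1 + s) := by
              rw [Real.logb, hγdef]; ring
            have h3 : γ * Real.log (1 + s) ≤ γ * s := mul_le_mul_of_nonneg_left hln hγ0
            nlinarith
          calc Real.exp ((k:ℝ) * Real.log C_D) ≤ Real.exp (Real.log C_D + γ * s) :=
                Real.exp_le_exp.2 hexp
            _ = C_D * Real.exp (γ * s) := by rw [Real.exp_add, Real.exp_log hCD0]
  -- convert to reals
  have hox : (0:ℝ) < (μ (Metric.closedBall o (Real.sqrt t))).toReal :=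
    ENNReal.toReal_pos (hpos o _ hst).ne' (hfin o _ hst).ne
  have hxx : (0:ℝ) < (μ (Metric.closedBall x (Real.sqrt t))).toReal :=
    ENNReal.toReal_pos (hpos x _ hst).ne' (hfin x _ hst).ne
  have hmeasR : (μ (Metric.closedBall x (Real.sqrt t))).toReal ≤
      C_D * Real.exp (γ * s) * (μ (Metric.closedBall o (Real.sqrt t))).toReal := by
    have := ENNReal.toReal_le_toReal (hfin x _ hst).ne
      (by exact ENNReal.mul_ne_top ENNReal.ofReal_ne_top (hfin o _ hst).ne) |>.2 hmeas
    rwa [ENNReal.toReal_mul, ENNReal.toReal_ofReal (by positivity)] at this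
  -- exponent inequality
  have hs2 : s ^ 2 = dist x o ^ 2 / t := by
    rw [hsdef, div_pow, Real.sq_sqrt ht.le]
  have hdxy : dist x y ^ 2 ≤ 2 * dist o x ^ 2 + 2 * dist o y ^ 2 := by
    have h := dist_triangle x o y
    rw [dist_comm x o] at h
    nlinarith [sq_nonneg (dist o x - dist o y), dist_nonneg (x := x) (y := y), h]
  have hexpineq : C_D * Real.exp (γ * s) * Real.exp (-(b * ((dist o x ^ 2 + dist o y ^ 2) / t)))
      ≤ C_D * Real.exp (γ ^ 2 / (2 * b)) * Real.exp (-(b / 4 * (dist x y ^ 2 / t))) := by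
    rw [mul_assoc, mul_assoc, ← Real.exp_add, ← Real.exp_add]
    apply mul_le_mul_of_nonneg_left _ hCD0.le
    apply Real.exp_le_exp.2
    have key1 : γ * s ≤ b / 2 * s ^ 2 + γ ^ 2 / (2 * b) := by
      have h := sq_nonneg (b * s - γ)
      have hb' : (0:ℝ) < 2 * b := by linarith
      have hγ2 : γ ^ 2 / (2 * b) * (2 * b) = γ ^ 2 := div_mul_cancel₀ _ hb'.ne'
      nlinarith [h, hγ2, hb]
    have key2 : b / 4 * (dist x y ^ 2 / t) ≤ b / 2 * ((dist o x ^ 2 + dist o y ^ 2) / t) := by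
      have h1 : dist x y ^ 2 / t ≤ (2 * dist o x ^ 2 + 2 * dist o y ^ 2) / t := by
        gcongr
        all_goals first | exact ht.le | exact hdxy
      calc b / 4 * (dist x y ^ 2 / t)
          ≤ b / 4 * ((2 * dist o x ^ 2 + 2 * dist o y ^ 2) / t) :=
            mul_le_mul_of_nonneg_left h1 (by positivity)
        _ = b / 2 * ((dist o x ^ 2 + dist o y ^ 2) / t) := by ring
    have hs2' : dist x o ^ 2 / t ≤ (dist o x ^ 2 + dist o y ^ 2) / t := by
      rw [dist_comm x o]
      gcongr
      nlinarith [sq_nonneg (dist o y)]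
    rw [hs2] at key1
    have h5 := mul_le_mul_of_nonneg_left hs2' (by positivity : (0:ℝ) ≤ b / 2)
    linarith [key1, key2, h5]
  -- assemble
  rw [div_mul_eq_mul_div, div_mul_eq_mul_div, div_le_div_iff₀ hox hxx, one_mul]
  calc Real.exp (-(b * ((dist o x ^ 2 + dist o y ^ 2) / t))) *
        (μ (Metric.closedBall x (Real.sqrt t))).toReal
      ≤ Real.exp (-(b * ((dist o x ^ 2 + dist o y ^ 2) / t))) *
        (C_D * Real.exp (γ * s) * (μ (Metric.closedBall o (Real.sqrt t))).toReal) :=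
        mul_le_mul_of_nonneg_left hmeasR (Real.exp_nonneg _)
    _ = (C_D * Real.exp (γ * s) * Real.exp (-(b * ((dist o x ^ 2 + dist o y ^ 2) / t)))) *
        (μ (Metric.closedBall o (Real.sqrt t))).toReal := by ring
    _ ≤ (C_D * Real.exp (γ ^ 2 / (2 * b)) * Real.exp (-(b / 4 * (dist x y ^ 2 / t)))) *
        (μ (Metric.closedBall o (Real.sqrt t))).toReal :=
        mul_le_mul_of_nonneg_right hexpineq hox.le
    _ = C_D * Real.exp (γ ^ 2 / (2 * b)) * Real.exp (-(b / 4 * (dist x y ^ 2 / t))) *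
        (μ (Metric.closedBall o (Real.sqrt t))).toReal := by ring
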